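/- (Volterra inequality) Let M be an n×n matrix with all entries positive, and let x(t), b(t) be continuous ℝ^n-valued functions on [0,T] satisfying the entrywise inequality x(t) ⪯ b(t) + ∫_0^t M·x(s) ds for all t ∈ [0,T]. Then x(T) ⪯ b(T) + ∫_0^T e^{M(T-t)}·M·b(t) dt entrywise. -/

import Mathlib

noncomputable section
open Real MeasureTheory Set

section aux
open NormedSpace
attribute [local instance] Matrix.linftyOpNormedAddCommGroup Matrix.linftyOpNormedRing
  Matrix.linftyOpNormedAlgebra

/-- entry evaluation as a continuous linear map -/
def entryCLM {n : ℕ} (i j : Fin n) : Matrix (Fin n) (Fin n) ℝ →L[ℝ] ℝ :=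
  LinearMap.toContinuousLinearMap
    { toFun := fun A => A i j
      map_add' := fun _ _ => rfl
      map_smul' := fun _ _ => rfl }

lemma pow_entry_nonneg {n : ℕ} {M : Matrix (Fin n) (Fin n) ℝ} (hM : ∀ i j, 0 ≤ M i j) :
    ∀ (k : ℕ) (i j : Fin n), 0 ≤ (M ^ k) i j := by
  intro k
  induction k with
  | zero => intro i j; simp [Matrix.one_apply]; positivity
  | succ m ih =>
    intro i j
    rw [pow_succ, Matrix.mul_apply]
    exact Finset.sum_nonneg fun l _ => mul_nonneg (ih i l) (hM l j)

lemma exp_entry_nonneg {n : ℕ} {M : Matrix (Fin n) (Fin n) ℝ} (hM : ∀ i j, 0 ≤ M i j)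
    (i j : Fin n) : 0 ≤ (NormedSpace.exp M) i j := by
  rw [exp_eq_tsum (𝕂 := ℝ)]
  have hs : Summable (fun k : ℕ => ((k.factorial : ℝ))⁻¹ • M ^ k) := expSeries_summable' M
  have := (entryCLM i j).map_tsum hs
  have key : (∑' k : ℕ, ((k.factorial : ℝ))⁻¹ • M ^ k) i j
      = ∑' k : ℕ, (((k.factorial : ℝ))⁻¹ • M ^ k) i j := this
  beta_reduce
  rw [key]
  exact tsum_nonneg fun k => by
    have := pow_entry_nonneg hM k i j
    simp only [Matrix.smul_apply, smul_eq_mul]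
    positivity

lemma hasDerivAt_expA {n : ℕ} (M : Matrix (Fin n) (Fin n) ℝ) (T t : ℝ) :
    HasDerivAt (fun u : ℝ => NormedSpace.exp ((T - u) • M)) (-(NormedSpace.exp ((T - t) • M) * M)) t := by
  have h1 : HasDerivAt (fun u : ℝ => T - u) (-1 : ℝ) t := by
    simpa using (hasDerivAt_id t).const_sub T
  have h2 := hasDerivAt_exp_smul_const M (T - t)
  have := HasDerivAt.scomp t h2 h1
  simp only [neg_smul, one_smul] at this
  exact this

lemma hasDerivAt_expA_entry {n : ℕ} (M : Matrix (Fin n) (Fin n) ℝ) (T t : ℝ) (i j : Fin n) :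
    HasDerivAt (fun u : ℝ => NormedSpace.exp ((T - u) • M) i j) ((-(NormedSpace.exp ((T - t) • M) * M)) i j) t :=
  (entryCLM i j).hasFDerivAt.comp_hasDerivAt t (hasDerivAt_expA M T t)

end aux

lemma deriv_sum_eq {n : ℕ} (A M : Matrix (Fin n) (Fin n) ℝ) (v w : Fin n → ℝ) (i : Fin n) :
    ∑ j, ((-(A * M)) i j * w j + A i j * (M.mulVec v) j)
      = (A.mulVec (M.mulVec v)) i - (A.mulVec (M.mulVec w)) i := by
  simp only [Matrix.mulVec, dotProduct, Matrix.mul_apply, Matrix.neg_apply,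
    Finset.sum_add_distrib, Finset.sum_mul, Finset.mul_sum, neg_mul, Finset.sum_neg_distrib]
  rw [Finset.sum_comm]
  ring_nf


/-- Volterra inequality: if `x(t) ⪯ b(t) + ∫₀ᵗ M·x(s) ds` entrywise on `[0,T]`
with `M` entrywise positive, then `x(T) ⪯ b(T) + ∫₀ᵀ e^{M(T-t)}·M·b(t) dt` entrywise. -/
theorem volterra_inequality {n : ℕ} (M : Matrix (Fin n) (Fin n) ℝ)
    (hM : ∀ i j, 0 < M i j)
    (T : ℝ) (hT : 0 ≤ T)
    (x b : ℝ → (Fin n → ℝ))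
    (hx : ContinuousOn x (Icc 0 T))
    (hb : ContinuousOn b (Icc 0 T))
    (hineq : ∀ t ∈ Icc (0 : ℝ) T, ∀ i,
      x t i ≤ b t i + ∫ s in (0 : ℝ)..t, (M.mulVec (x s)) i) :
    ∀ i, x T i ≤ b T i
      + ∫ t in (0 : ℝ)..T, ((NormedSpace.exp ((T - t) • M)).mulVec (M.mulVec (b t))) i := by
  intro i
  have hMnn : ∀ i j, 0 ≤ M i j := fun i j => (hM i j).le
  set A : ℝ → Matrix (Fin n) (Fin n) ℝ := fun t => NormedSpace.exp ((T - t) • M) with hA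
  have hAd : ∀ (t : ℝ) (i j : Fin n),
      HasDerivAt (fun u : ℝ => A u i j) ((-(A t * M)) i j) t := fun t i j =>
    hasDerivAt_expA_entry M T t i j
  have hAcont : ∀ i j, Continuous fun t => A t i j := fun i j =>
    continuous_iff_continuousAt.2 fun t => (hAd t i j).continuousAt
  have hAnn : ∀ t, t ≤ T → ∀ i j, 0 ≤ A t i j := by
    intro t ht i j
    refine exp_entry_nonneg (fun i j => ?_) i j
    have : ((T - t) • M) i j = (T - t) * M i j := rfl
    rw [this]
    exact mul_nonneg (by linarith) (hMnn i j)
  set y : ℝ → Fin n → ℝ := fun t k => ∫ s in (0 : ℝ)..t, (M.mulVec (x s)) k with hy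
  -- continuity of the integrand entries
  have hfcont : ∀ k, ContinuousOn (fun s => (M.mulVec (x s)) k) (Icc 0 T) := by
    intro k
    show ContinuousOn (fun s => ∑ j, M k j * x s j) (Icc 0 T)
    exact continuousOn_finset_sum _ fun j _ =>
      continuousOn_const.mul ((continuous_apply j).comp_continuousOn hx)
  have hfint : ∀ k, IntervalIntegrable (fun s => (M.mulVec (x s)) k) volume 0 T := by
    intro k
    have h := hfcont k
    rw [← uIcc_of_le hT] at h
    exact h.intervalIntegrable
  have hycont : ∀ k, ContinuousOn (fun t => y t k) (Icc 0 T) := by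
    intro k
    have := intervalIntegral.continuousOn_primitive_interval'
      (μ := volume) (hfint k) (a := 0) (by rw [uIcc_of_le hT]; exact ⟨le_rfl, hT⟩)
    rwa [uIcc_of_le hT] at this
  have hyd : ∀ k, ∀ t ∈ Ioo (0 : ℝ) T, HasDerivAt (fun u => y u k) ((M.mulVec (x t)) k) t := by
    intro k t ht
    have hmem : Icc (0 : ℝ) T ∈ nhds t := Icc_mem_nhds ht.1 ht.2
    have hct : ContinuousAt (fun s => (M.mulVec (x s)) k) t := (hfcont k).continuousAt hmem
    have hmeas : StronglyMeasurableAtFilter (fun s => (M.mulVec (x s)) k) (nhds t) volume :=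
      ContinuousAt.stronglyMeasurableAtFilter isOpen_Ioo
        (fun u hu => (hfcont k).continuousAt (Icc_mem_nhds hu.1 hu.2)) t ht
    have hsub : uIcc (0 : ℝ) t ⊆ uIcc (0 : ℝ) T := by
      rw [uIcc_of_le hT, uIcc_of_le ht.1.le]
      exact Icc_subset_Icc le_rfl ht.2.le
    exact intervalIntegral.integral_hasDerivAt_right ((hfint k).mono_set hsub) hmeas hct
  set w : ℝ → ℝ := fun t => ∑ j, A t i j * y t j with hw
  set d : ℝ → ℝ := fun t =>
    (A t).mulVec (M.mulVec (x t)) i - (A t).mulVec (M.mulVec (y t)) i with hd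
  have hwd : ∀ t ∈ Ioo (0 : ℝ) T, HasDerivAt w (d t) t := by
    intro t ht
    have h := HasDerivAt.fun_sum
      (fun j (_ : j ∈ Finset.univ) => (hAd t i j).mul (hyd j t ht))
    rw [hw, hd]
    exact h.congr_deriv (deriv_sum_eq (A t) M (x t) (y t) i)
  have hwcont : ContinuousOn w (Icc 0 T) :=
    continuousOn_finset_sum _ fun j _ => (hAcont i j).continuousOn.mul (hycont j)
  -- continuity of d and the bound g
  have hAvcont : ∀ (v : ℝ → Fin n → ℝ), ContinuousOn v (Icc 0 T) →
      ContinuousOn (fun t => (A t).mulVec (M.mulVec (v t)) i) (Icc 0 T) := by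
    intro v hv
    show ContinuousOn (fun t => ∑ j, A t i j * ∑ l, M j l * v t l) (Icc 0 T)
    exact continuousOn_finset_sum _ fun j _ => (hAcont i j).continuousOn.mul
      (continuousOn_finset_sum _ fun l _ =>
        continuousOn_const.mul ((continuous_apply l).comp_continuousOn hv))
  have hdint : IntervalIntegrable d volume 0 T := by
    apply ContinuousOn.intervalIntegrable
    rw [uIcc_of_le hT]
    exact (hAvcont x hx).sub (hAvcont y (by
      exact continuousOn_pi.2 fun k => hycont k))
  have hgint : IntervalIntegrable (fun t => (A t).mulVec (M.mulVec (b t)) i) volume 0 T := by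
    apply ContinuousOn.intervalIntegrable
    rw [uIcc_of_le hT]
    exact hAvcont b hb
  have hdle : ∀ t ∈ Icc (0 : ℝ) T, d t ≤ (A t).mulVec (M.mulVec (b t)) i := by
    intro t ht
    have hxy : ∀ k, (M.mulVec (x t)) k ≤ (M.mulVec (b t)) k + (M.mulVec (y t)) k := by
      intro k
      show ∑ j, M k j * x t j ≤ (∑ j, M k j * b t j) + ∑ j, M k j * y t j
      rw [← Finset.sum_add_distrib]
      refine Finset.sum_le_sum fun j _ => ?_
      rw [← mul_add]
      exact mul_le_mul_of_nonneg_left (hineq t ht j) (hMnn k j)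
    have h1 : (A t).mulVec (M.mulVec (x t)) i
        ≤ (A t).mulVec (M.mulVec (b t)) i + (A t).mulVec (M.mulVec (y t)) i := by
      have heq : (A t).mulVec (M.mulVec (b t)) i + (A t).mulVec (M.mulVec (y t)) i
          = ∑ j, A t i j * ((M.mulVec (b t)) j + (M.mulVec (y t)) j) := by
        show (∑ j, A t i j * (M.mulVec (b t)) j) + (∑ j, A t i j * (M.mulVec (y t)) j)
          = ∑ j, A t i j * ((M.mulVec (b t)) j + (M.mulVec (y t)) j)
        rw [← Finset.sum_add_distrib]
        simp only [mul_add]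
      rw [heq]
      show ∑ j, A t i j * (M.mulVec (x t)) j
        ≤ ∑ j, A t i j * ((M.mulVec (b t)) j + (M.mulVec (y t)) j)
      refine Finset.sum_le_sum fun j _ => ?_
      exact mul_le_mul_of_nonneg_left (hxy j) (hAnn t ht.2 i j)
    show (A t).mulVec (M.mulVec (x t)) i - (A t).mulVec (M.mulVec (y t)) i
      ≤ (A t).mulVec (M.mulVec (b t)) i
    linarith
  have hfund : ∫ t in (0 : ℝ)..T, d t = w T - w 0 := by
    apply intervalIntegral.integral_eq_sub_of_hasDeriv_right
    · rwa [uIcc_of_le hT]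
    · rw [min_eq_left hT, max_eq_right hT]
      exact fun t ht => (hwd t ht).hasDerivWithinAt
    · exact hdint
  have hw0 : w 0 = 0 := by
    have hy0 : ∀ k, y 0 k = 0 := fun k => intervalIntegral.integral_same
    simp [hw, hy0]
  have hwT : w T = y T i := by
    have hAT : A T = 1 := by
      rw [hA]
      show NormedSpace.exp ((T - T) • M) = 1
      rw [sub_self, zero_smul, NormedSpace.exp_zero]
    show ∑ j, A T i j * y T j = y T i
    rw [hAT]
    simp [Matrix.one_apply]
  have hmono : ∫ t in (0 : ℝ)..T, d t
      ≤ ∫ t in (0 : ℝ)..T, (A t).mulVec (M.mulVec (b t)) i :=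
    intervalIntegral.integral_mono_on hT hdint hgint hdle
  have hyT : y T i ≤ ∫ t in (0 : ℝ)..T, (A t).mulVec (M.mulVec (b t)) i := by
    have h2 := hfund
    rw [hw0, hwT, sub_zero] at h2
    rw [← h2]
    exact hmono
  have hxT : x T i ≤ b T i + y T i := hineq T ⟨hT, le_rfl⟩ i
  calc x T i ≤ b T i + y T i := hxT
    _ ≤ b T i + ∫ t in (0 : ℝ)..T, (A t).mulVec (M.mulVec (b t)) i := by linarith
    _ = _ := rfl
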